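/- For every natural number k, the set { n : ℕ | catsize(n) = k } is finite and has exactly C_k elements, where C_k denotes the k-th Catalan number. -/

import Mathlib

/-- The pairing function `c`. -/
def c (i j : ℕ) : ℕ := if Odd j then 2 ^ (i + 1) * j else 2 ^ (i + 1) * (j + 1) - 1

/-- The inverse of `c` on positive naturals (returns `(0,0)` at `0`). -/
def c' (n : ℕ) : ℕ × ℕ :=
  (padicValNat 2 (n + n % 2) - 1, (n + n % 2) / 2 ^ padicValNat 2 (n + n % 2) - n % 2)


lemma padic_aux {i m : ℕ} (hm : Odd m) : padicValNat 2 (2 ^ (i + 1) * m) = i + 1 := by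
  haveI : Fact (Nat.Prime 2) := ⟨Nat.prime_two⟩
  have hm0 : m ≠ 0 := by rintro rfl; simp at hm
  rw [padicValNat.mul (by positivity) hm0, padicValNat.prime_pow,
    padicValNat.eq_zero_of_not_dvd (by rwa [Nat.odd_iff, ← Nat.two_dvd_ne_zero] at hm)]

lemma c'_c (i j : ℕ) : c' (c i j) = (i, j) := by
  by_cases hj : Odd j
  · have hn : c i j = 2 ^ (i + 1) * j := by simp [c, hj]
    obtain ⟨t, ht⟩ : 2 ∣ c i j := by rw [hn]; exact Dvd.dvd.mul_right ⟨2 ^ i, by ring⟩ j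
    have hmod : c i j % 2 = 0 := by omega
    rw [hn] at hmod
    simp only [c', hn, hmod, Nat.add_zero, padic_aux hj, Nat.add_sub_cancel,
      Nat.mul_div_cancel_left _ (Nat.two_pow_pos (i + 1)), Nat.sub_zero]
  · have hj1 : Odd (j + 1) := by rw [Nat.odd_iff] at hj ⊢; omega
    have hn : c i j = 2 ^ (i + 1) * (j + 1) - 1 := by simp [c, hj]
    obtain ⟨t, ht⟩ : 2 ∣ 2 ^ (i + 1) * (j + 1) := Dvd.dvd.mul_right ⟨2 ^ i, by ring⟩ _
    have hpos : 0 < 2 ^ (i + 1) * (j + 1) := by positivity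
    have hmod : c i j % 2 = 1 := by omega
    have hadd1 : c i j + 1 = 2 ^ (i + 1) * (j + 1) := by omega
    simp only [c', hmod, hadd1, padic_aux hj1, Nat.add_sub_cancel,
      Nat.mul_div_cancel_left _ (Nat.two_pow_pos (i + 1))]

lemma even_decomp {N : ℕ} (hN : 0 < N) (h2 : 2 ∣ N) :
    1 ≤ padicValNat 2 N ∧ ¬ 2 ∣ N / 2 ^ padicValNat 2 N ∧
      2 ^ padicValNat 2 N * (N / 2 ^ padicValNat 2 N) = N := by
  haveI : Fact (Nat.Prime 2) := ⟨Nat.prime_two⟩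
  have hfac : N.factorization 2 = padicValNat 2 N := Nat.factorization_def N Nat.prime_two
  refine ⟨one_le_padicValNat_of_dvd hN.ne' h2, ?_, ?_⟩
  · have := Nat.not_dvd_ordCompl Nat.prime_two hN.ne'
    rwa [hfac] at this
  · have := Nat.ordProj_mul_ordCompl_eq_self N 2
    rwa [hfac] at this

lemma c_c' {n : ℕ} (hn : 0 < n) : c (c' n).1 (c' n).2 = n := by
  rcases Nat.even_or_odd n with he | ho
  · have hmod : n % 2 = 0 := Nat.even_iff.mp he
    obtain ⟨hv1, hmodd, hNm⟩ := even_decomp hn (by omega)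
    have hc : c' n = (padicValNat 2 n - 1, n / 2 ^ padicValNat 2 n) := by
      simp [c', hmod]
    rw [hc]
    have hmOdd : Odd (n / 2 ^ padicValNat 2 n) := Nat.odd_iff.mpr (by omega)
    simp only [c, if_pos hmOdd]
    rw [Nat.sub_add_cancel hv1, hNm]
  · have hmod : n % 2 = 1 := Nat.odd_iff.mp ho
    obtain ⟨hv1, hmodd, hNm⟩ := even_decomp (show 0 < n + 1 by omega) (by omega)
    have hmpos : 0 < (n + 1) / 2 ^ padicValNat 2 (n + 1) := by
      rcases Nat.eq_zero_or_pos ((n + 1) / 2 ^ padicValNat 2 (n + 1)) with h | h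
      · rw [h, Nat.mul_zero] at hNm; omega
      · exact h
    have hc : c' n = (padicValNat 2 (n + 1) - 1,
        (n + 1) / 2 ^ padicValNat 2 (n + 1) - 1) := by
      simp [c', hmod]
    rw [hc]
    have hmE : ¬ Odd ((n + 1) / 2 ^ padicValNat 2 (n + 1) - 1) := by
      rw [Nat.odd_iff]; omega
    simp only [c, if_neg hmE]
    rw [Nat.sub_add_cancel hmpos, Nat.sub_add_cancel hv1, hNm]
    omega

lemma c_pos (i j : ℕ) : 0 < c i j := by
  by_cases hj : Odd j
  · have : j ≠ 0 := by rintro rfl; simp at hj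
    simp only [c, if_pos hj]; positivity
  · simp only [c, if_neg hj]
    have h2 : (2 : ℕ) ≤ 2 ^ (i + 1) := by
      calc (2:ℕ) = 2 ^ 1 := (pow_one 2).symm
      _ ≤ 2 ^ (i + 1) := Nat.pow_le_pow_right (by norm_num) (by omega)
    have : 2 ≤ 2 ^ (i + 1) * (j + 1) :=
      le_trans h2 (Nat.le_mul_of_pos_right _ (by omega))
    omega

lemma c_uncurried_inj : Function.Injective (fun p : ℕ × ℕ => c p.1 p.2) := by
  intro p q h
  have := congrArg c' h
  simpa [c'_c] using this

lemma c'_fst_lt {n : ℕ} (hn : 0 < n) : (c' n).1 < n := by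
  have hm : 0 < n + n % 2 := by omega
  have hdvd : (2 : ℕ) ^ padicValNat 2 (n + n % 2) ∣ (n + n % 2) := pow_padicValNat_dvd
  have hle : (2 : ℕ) ^ padicValNat 2 (n + n % 2) ≤ n + n % 2 := Nat.le_of_dvd hm hdvd
  have hlt : padicValNat 2 (n + n % 2) < 2 ^ padicValNat 2 (n + n % 2) := Nat.lt_two_pow_self
  simp only [c']
  generalize hv : padicValNat 2 (n + n % 2) = v at *
  generalize hp : (2 : ℕ) ^ v = p at *
  omega

lemma c'_snd_lt {n : ℕ} (hn : 0 < n) : (c' n).2 < n := by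
  have hm : 0 < n + n % 2 := by omega
  have h2 : (2 : ℕ) ∣ (n + n % 2) := by omega
  have hv : 1 ≤ padicValNat 2 (n + n % 2) := one_le_padicValNat_of_dvd hm.ne' h2
  have h2le : (2 : ℕ) ≤ 2 ^ padicValNat 2 (n + n % 2) := by
    calc (2:ℕ) = 2 ^ 1 := (pow_one 2).symm
    _ ≤ 2 ^ padicValNat 2 (n + n % 2) := Nat.pow_le_pow_right (by norm_num) hv
  have hle : (n + n % 2) / 2 ^ padicValNat 2 (n + n % 2) ≤ (n + n % 2) / 2 :=
    Nat.div_le_div_left h2le (by norm_num)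
  simp only [c']
  generalize hq : (n + n % 2) / 2 ^ padicValNat 2 (n + n % 2) = q at *
  omega

lemma c'_fst_lt_of_lt {m n : ℕ} (h : m < n) : (c' m).1 < n := by
  rcases Nat.eq_zero_or_pos m with rfl | hm
  · simp [c']; omega
  · exact lt_trans (c'_fst_lt hm) h

lemma c'_snd_lt_of_lt {m n : ℕ} (h : m < n) : (c' m).2 < n := by
  rcases Nat.eq_zero_or_pos m with rfl | hm
  · simp [c']; omega
  · exact lt_trans (c'_snd_lt hm) h

def catsize : ℕ → ℕ
  | 0 => 0
  | n + 1 => 1 + catsize (c' (n + 1)).1 + catsize (c' (n + 1)).2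
  decreasing_by
  · exact c'_fst_lt (Nat.succ_pos n)
  · exact c'_snd_lt (Nat.succ_pos n)


lemma catsize_zero : catsize 0 = 0 := by rw [catsize]

lemma catsize_of_pos {n : ℕ} (hn : 0 < n) :
    catsize n = 1 + catsize (c' n).1 + catsize (c' n).2 := by
  obtain ⟨m, rfl⟩ := Nat.exists_eq_succ_of_ne_zero hn.ne'
  rw [catsize]

lemma catsize_c (i j : ℕ) : catsize (c i j) = 1 + catsize i + catsize j := by
  rw [catsize_of_pos (c_pos i j), c'_c]

lemma catsize_eq_zero {n : ℕ} (h : catsize n = 0) : n = 0 := by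
  by_contra hne
  rw [catsize_of_pos (Nat.pos_of_ne_zero hne)] at h
  omega

lemma fiber_finite : ∀ k, {n : ℕ | catsize n = k}.Finite := by
  intro k
  induction k using Nat.strong_induction_on with
  | _ k IH =>
    match k with
    | 0 =>
      have : {n : ℕ | catsize n = 0} = {0} := by
        ext n; simp only [Set.mem_setOf_eq, Set.mem_singleton_iff]
        exact ⟨catsize_eq_zero, by rintro rfl; exact catsize_zero⟩
      rw [this]; exact Set.finite_singleton 0
    | k + 1 =>
      have hsub : {n : ℕ | catsize n = k + 1} ⊆
          (fun p : ℕ × ℕ => c p.1 p.2) ''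
            (⋃ p ∈ Finset.HasAntidiagonal.antidiagonal k,
              {n : ℕ | catsize n = p.1} ×ˢ {n : ℕ | catsize n = p.2}) := by
        intro n hn
        have hnpos : 0 < n := by
          rcases Nat.eq_zero_or_pos n with rfl | h
          · simp only [Set.mem_setOf_eq, catsize_zero] at hn; omega
          · exact h
        refine ⟨c' n, ?_, c_c' hnpos⟩
        have hrec := catsize_of_pos hnpos
        simp only [Set.mem_setOf_eq] at hn
        simp only [Set.mem_iUnion, Finset.HasAntidiagonal.mem_antidiagonal]
        exact ⟨(catsize (c' n).1, catsize (c' n).2), by omega, rfl, rfl⟩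
      refine Set.Finite.subset (Set.Finite.image _ ?_) hsub
      refine Set.Finite.biUnion (Finset.HasAntidiagonal.antidiagonal k).finite_toSet ?_
      intro p hp
      rw [Finset.mem_coe, Finset.HasAntidiagonal.mem_antidiagonal] at hp
      exact Set.Finite.prod (IH p.1 (by omega)) (IH p.2 (by omega))

noncomputable def Fib (k : ℕ) : Finset ℕ := (fiber_finite k).toFinset

lemma mem_Fib {n k : ℕ} : n ∈ Fib k ↔ catsize n = k := by
  simp [Fib, Set.Finite.mem_toFinset]

lemma Fib_card : ∀ k, (Fib k).card = catalan k := by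
  intro k
  induction k using Nat.strong_induction_on with
  | _ k IH =>
    match k with
    | 0 =>
      have : Fib 0 = {0} := by
        ext n; rw [mem_Fib, Finset.mem_singleton]
        exact ⟨catsize_eq_zero, by rintro rfl; exact catsize_zero⟩
      simp [this]
    | k + 1 =>
      have hEq : Fib (k + 1) =
          ((Finset.HasAntidiagonal.antidiagonal k).biUnion (fun p => Fib p.1 ×ˢ Fib p.2)).image
            (fun q : ℕ × ℕ => c q.1 q.2) := by
        ext n
        rw [mem_Fib, Finset.mem_image]
        constructor
        · intro hn
          have hnpos : 0 < n := by
            rcases Nat.eq_zero_or_pos n with rfl | h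
            · rw [catsize_zero] at hn; omega
            · exact h
          refine ⟨c' n, ?_, c_c' hnpos⟩
          have hrec := catsize_of_pos hnpos
          rw [Finset.mem_biUnion]
          exact ⟨(catsize (c' n).1, catsize (c' n).2),
            Finset.HasAntidiagonal.mem_antidiagonal.mpr (by omega),
            Finset.mem_product.mpr ⟨mem_Fib.mpr rfl, mem_Fib.mpr rfl⟩⟩
        · rintro ⟨q, hq, rfl⟩
          rw [Finset.mem_biUnion] at hq
          obtain ⟨p, hp, hq⟩ := hq
          rw [Finset.HasAntidiagonal.mem_antidiagonal] at hp
          rw [Finset.mem_product] at hq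
          have h1 := mem_Fib.mp hq.1
          have h2 := mem_Fib.mp hq.2
          rw [catsize_c]; omega
      rw [hEq, Finset.card_image_of_injective _ c_uncurried_inj,
        Finset.card_biUnion, catalan_succ']
      · refine Finset.sum_congr rfl fun p hp => ?_
        rw [Finset.HasAntidiagonal.mem_antidiagonal] at hp
        rw [Finset.card_product, IH p.1 (by omega), IH p.2 (by omega)]
      · intro p hp q hq hpq
        simp only [Finset.disjoint_left]
        intro a ha ha'
        rw [Finset.mem_product] at ha ha'
        exact hpq (Prod.ext
          ((mem_Fib.mp ha.1).symm.trans (mem_Fib.mp ha'.1))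
          ((mem_Fib.mp ha.2).symm.trans (mem_Fib.mp ha'.2)))

theorem catsize_fiber_card_eq_catalan (k : ℕ) :
    {n : ℕ | catsize n = k}.Finite ∧ {n : ℕ | catsize n = k}.ncard = catalan k := by
  refine ⟨fiber_finite k, ?_⟩
  rw [Set.ncard_eq_toFinset_card _ (fiber_finite k)]
  exact Fib_card k
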